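/- Let A be a 3×3 octonionic Hermitian matrix and suppose A·v = v·λ for v = (x, y, z) ∈ 𝕆³ and λ ∈ 𝕆. Then x ⋅ (a·y) + z ⋅ (b·x) = |x|²·(Re(λ) − p), where Re(λ) is regarded as a real number. -/

import Mathlib

noncomputable section

open Quaternion

/-- The octonions, realized as the Cayley–Dickson double of the real quaternions:
pairs of quaternions. -/
abbrev 𝕆 : Type := ℍ[ℝ] × ℍ[ℝ]

namespace Octonion

/-- Cayley–Dickson multiplication: `(a, b)·(c, d) = (a·c − conj(d)·b, d·a + b·conj(c))`. -/
def omul (x y : 𝕆) : 𝕆 :=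
  (x.1 * y.1 - star y.2 * x.2, y.2 * x.1 + x.2 * star y.1)

/-- Octonionic conjugation: `conj (a, b) = (conj a, −b)`. -/
def oconj (x : 𝕆) : 𝕆 := (star x.1, -x.2)

/-- The embedding of the reals, `r ↦ (r, 0)`. -/
def oR (r : ℝ) : 𝕆 := ((r : ℍ[ℝ]), 0)

/-- The unit octonion `1 = (1, 0)`. -/
def o1 : 𝕆 := oR 1

/-- The associator `[a,b,c] = (a·b)·c − a·(b·c)`. -/
def oassoc (a b c : 𝕆) : 𝕆 := omul (omul a b) c - omul a (omul b c)

/-- The inner product: the real number with `(a·conj b + b·conj a)/2 = (a ⋅ b)·1`. -/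
def odot (x y : 𝕆) : ℝ := (omul x (oconj y) + omul y (oconj x)).1.re / 2

/-- The squared norm `|x|²`, the real number with `x·conj x = |x|²·1`. -/
def onormSq (x : 𝕆) : ℝ := odot x x

/-- The real part of an octonion, as a real number. -/
def oreR (x : 𝕆) : ℝ := x.1.re

/-- The imaginary part `Im(x) = (x − conj x)/2`. -/
def oIm (x : 𝕆) : 𝕆 := (2:ℝ)⁻¹ • (x - oconj x)

/-- The imaginary units. -/
def oi : 𝕆 := (⟨0,1,0,0⟩, 0)
def oj : 𝕆 := (⟨0,0,1,0⟩, 0)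
def ok : 𝕆 := (⟨0,0,0,1⟩, 0)
def ol : 𝕆 := (0, 1)
def oil : 𝕆 := (0, ⟨0,1,0,0⟩)
def ojl : 𝕆 := (0, ⟨0,0,1,0⟩)
def okl : 𝕆 := (0, ⟨0,0,0,1⟩)

end Octonion


open Octonion

set_option maxHeartbeats 2000000 in
private lemma odot_swap (b x z : 𝕆) : odot x (omul (oconj b) z) = odot z (omul b x) := by
  obtain ⟨b1,b5⟩ := b
  obtain ⟨x1,x5⟩ := x
  obtain ⟨z1,z5⟩ := z
  simp [odot, omul, oconj, Quaternion.re_mul, Quaternion.imI_mul, Quaternion.imJ_mul, Quaternion.imK_mul]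
  ring

set_option maxHeartbeats 2000000 in
private lemma odot_self_mul (x w : 𝕆) : odot x (omul x w) = onormSq x * oreR w := by
  obtain ⟨x1,x5⟩ := x
  obtain ⟨w1,w5⟩ := w
  simp [odot, omul, oconj, onormSq, oreR, Quaternion.re_mul, Quaternion.imI_mul, Quaternion.imJ_mul, Quaternion.imK_mul]
  ring

set_option maxHeartbeats 2000000 in
private lemma odot_add_right (x u v : 𝕆) : odot x (u + v) = odot x u + odot x v := by
  obtain ⟨x1,x5⟩ := x
  obtain ⟨u1,u5⟩ := u
  obtain ⟨v1,v5⟩ := v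
  simp [odot, omul, oconj, Quaternion.re_mul, Quaternion.imI_mul, Quaternion.imJ_mul, Quaternion.imK_mul]
  ring

private lemma oreR_sub_oR (lam : 𝕆) (p : ℝ) : oreR (lam - oR p) = oreR lam - p := by
  simp [oreR, oR]

/-- If `A·v = v·λ` for the `3×3` octonionic Hermitian matrix `A` and
`v = (x,y,z)`, then `x ⋅ (a·y) + z ⋅ (b·x) = |x|²·(Re(λ) − p)`. -/

theorem re_lam_formula (p m n : ℝ) (a b c x y z lam : 𝕆)
    (h1 : omul a y + omul (oconj b) z = omul x (lam - oR p))
    (h2 : omul c z + omul (oconj a) x = omul y (lam - oR m))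
    (h3 : omul b x + omul (oconj c) y = omul z (lam - oR n)) :
    odot x (omul a y) + odot z (omul b x) = onormSq x * (oreR lam - p) := by
  have key : odot x (omul a y + omul (oconj b) z) = odot x (omul x (lam - oR p)) := by
    rw [h1]
  rw [odot_add_right, odot_swap, odot_self_mul, oreR_sub_oR] at key
  exact key
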